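/- arXiv:2002.12836 — 2 statements merged into one kernel-verified Lean document; each statement's English description precedes it below -/
import Mathlib

section
/- The Bessel operators with parameter λ = 2 − m commute with each other: B(x_i)B(x_j) = B(x_j)B(x_i) as operators on polynomials in m commuting variables, where B(x_i) = (m − 2 + 2E)∂_i − x_i Δ. -/
open MvPolynomial

set_option maxHeartbeats 1000000

noncomputable section

/-- The lowered partial derivative `∂_j = ∑_i β_{ji} ∂^i`. -/
def dlow (m : ℕ) (g : Matrix (Fin m) (Fin m) ℂ) (j : Fin m)
    (p : MvPolynomial (Fin m) ℂ) : MvPolynomial (Fin m) ℂ :=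
  ∑ i, g j i • pderiv i p

/-- The Euler operator `E = ∑_{i,j} β^{ij} x_i ∂_j`. -/
def Eop (m : ℕ) (g : Matrix (Fin m) (Fin m) ℂ)
    (p : MvPolynomial (Fin m) ℂ) : MvPolynomial (Fin m) ℂ :=
  ∑ i, ∑ j, (g⁻¹ i j) • (X i * dlow m g j p)

/-- The Laplacian `Δ = ∑_{i,j} β^{ij} ∂_i ∂_j`. -/
def Lap (m : ℕ) (g : Matrix (Fin m) (Fin m) ℂ)
    (p : MvPolynomial (Fin m) ℂ) : MvPolynomial (Fin m) ℂ :=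
  ∑ i, ∑ j, (g⁻¹ i j) • dlow m g i (dlow m g j p)

/-- The squared radial coordinate `R² = ∑_{i,j} β^{ij} x_i x_j`. -/
def R2 (m : ℕ) (g : Matrix (Fin m) (Fin m) ℂ) : MvPolynomial (Fin m) ℂ :=
  ∑ i, ∑ j, (g⁻¹ i j) • (X i * X j)

/-- The Bessel operator `B(x_i) = (m − 2 + 2E)∂_i − x_i Δ` (parameter `λ = 2 − m`). -/
def Bop (m : ℕ) (g : Matrix (Fin m) (Fin m) ℂ) (i : Fin m)
    (p : MvPolynomial (Fin m) ℂ) : MvPolynomial (Fin m) ℂ :=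
  ((m : ℂ) - 2) • dlow m g i p + (2 : ℂ) • Eop m g (dlow m g i p) - X i * Lap m g p

namespace BesselAux

variable {m : ℕ}

abbrev P (m : ℕ) := MvPolynomial (Fin m) ℂ

/-- partial derivative as an endomorphism -/
def Dop (a : Fin m) : Module.End ℂ (P m) := (pderiv a).toLinearMap

/-- multiplication by `X a` as an endomorphism -/
def Mop (a : Fin m) : Module.End ℂ (P m) := LinearMap.mulLeft ℂ (X a)

/-- Kronecker delta -/
def δ (a b : Fin m) : ℂ := if a = b then 1 else 0

/-- lowered derivative -/
def Dl (g : Matrix (Fin m) (Fin m) ℂ) (i : Fin m) : Module.End ℂ (P m) :=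
  ∑ a, g i a • Dop a

/-- Euler operator -/
def Eo (m : ℕ) : Module.End ℂ (P m) := ∑ a, Mop a * Dop a

/-- Laplacian -/
def Δo (g : Matrix (Fin m) (Fin m) ℂ) : Module.End ℂ (P m) :=
  ∑ a, ∑ b, g a b • (Dop a * Dop b)

/-- the operator `m - 2 + 2E` -/
def Aop (m : ℕ) : Module.End ℂ (P m) := ((m : ℂ) - 2) • 1 + (2 : ℂ) • Eo m

/-- Bessel operator -/
def Bo (m : ℕ) (g : Matrix (Fin m) (Fin m) ℂ) (i : Fin m) : Module.End ℂ (P m) :=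
  Aop m * Dl g i - Mop i * Δo g

@[simp] lemma Dop_apply (a : Fin m) (p : P m) : Dop a p = pderiv a p := rfl
@[simp] lemma Mop_apply (a : Fin m) (p : P m) : Mop a p = X a * p := rfl

lemma pderiv_comm' (a b : Fin m) (p : P m) :
    pderiv a (pderiv b p) = pderiv b (pderiv a p) := by
  induction p using MvPolynomial.induction_on with
  | C c => simp
  | add p q hp hq => simp [hp, hq]
  | mul_X p n ih =>
      simp only [pderiv_mul, map_add, ih]
      by_cases ha : a = n <;> by_cases hb : b = n <;>
        simp [ha, hb, pderiv_X_of_ne, pderiv_X_self] <;> ring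

lemma DD_comm (a b : Fin m) : Dop a * Dop b = Dop b * Dop a :=
  LinearMap.ext fun p => pderiv_comm' a b p

lemma DM (a b : Fin m) : Dop a * Mop b = Mop b * Dop a + δ a b • 1 := by
  refine LinearMap.ext fun p => ?_
  simp only [LinearMap.add_apply, Module.End.mul_apply, Dop_apply, Mop_apply,
    LinearMap.smul_apply, Module.End.one_apply, pderiv_mul]
  by_cases h : a = b <;> simp [h, δ, smul_eq_C_mul] <;> ring

/-- generic expansion of products of sums of scaled operators -/
lemma sum_smul_mul (f k : Fin m → ℂ) (F K : Fin m → Module.End ℂ (P m)) :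
    (∑ a, f a • F a) * (∑ b, k b • K b) = ∑ a, ∑ b, (f a * k b) • (F a * K b) := by
  rw [Finset.sum_mul]
  refine Finset.sum_congr rfl fun a _ => ?_
  rw [smul_mul_assoc, Finset.mul_sum, Finset.smul_sum]
  refine Finset.sum_congr rfl fun b _ => ?_
  rw [mul_smul_comm, smul_smul]

lemma DlDl (g : Matrix (Fin m) (Fin m) ℂ) (i j : Fin m) :
    Dl g i * Dl g j = Dl g j * Dl g i := by
  simp only [Dl, sum_smul_mul]
  rw [Finset.sum_comm]
  refine Finset.sum_congr rfl fun a _ => Finset.sum_congr rfl fun b _ => ?_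
  rw [DD_comm b a, mul_comm]

lemma MM (a b : Fin m) : Mop a * Mop b = Mop b * Mop a := by
  refine LinearMap.ext fun p => ?_
  simp only [Module.End.mul_apply, Mop_apply]
  ring

/-- `Dl i` commutes with `Mop b` up to `g i b`. -/
lemma DlM (g : Matrix (Fin m) (Fin m) ℂ) (i b : Fin m) :
    Dl g i * Mop b = Mop b * Dl g i + g i b • 1 := by
  simp only [Dl, Finset.sum_mul, Finset.mul_sum, smul_mul_assoc, mul_smul_comm, DM,
    smul_add, Finset.sum_add_distrib]
  congr 1
  rw [Finset.sum_eq_single b]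
  · simp [δ]
  · intro c _ hc; simp [δ, hc]
  · simp

lemma DE (a : Fin m) : Dop a * Eo m = Eo m * Dop a + Dop a := by
  simp only [Eo, Finset.sum_mul, Finset.mul_sum]
  have h : ∀ b : Fin m, Dop a * (Mop b * Dop b)
      = Mop b * Dop b * Dop a + δ a b • Dop b := by
    intro b
    rw [← mul_assoc, DM, add_mul, mul_assoc, mul_assoc, DD_comm a b, ← mul_assoc,
      smul_mul_assoc, one_mul]
  rw [Finset.sum_congr rfl fun b _ => h b, Finset.sum_add_distrib]
  congr 1
  rw [Finset.sum_eq_single a]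
  · simp [δ]
  · intro c _ hc; simp [δ, Ne.symm hc]
  · simp

lemma DlE (g : Matrix (Fin m) (Fin m) ℂ) (i : Fin m) :
    Dl g i * Eo m = Eo m * Dl g i + Dl g i := by
  simp only [Dl, Finset.sum_mul, Finset.mul_sum, smul_mul_assoc, mul_smul_comm, DE]
  simp [smul_add, Finset.sum_add_distrib]

lemma EM (a : Fin m) : Eo m * Mop a = Mop a * Eo m + Mop a := by
  simp only [Eo, Finset.sum_mul, Finset.mul_sum]
  have h : ∀ b : Fin m, Mop b * Dop b * Mop a
      = Mop a * (Mop b * Dop b) + δ b a • Mop b := by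
    intro b
    rw [mul_assoc, DM, mul_add, ← mul_assoc, MM b a, mul_assoc, ← mul_assoc,
      mul_smul_comm, mul_one]
  rw [Finset.sum_congr rfl fun b _ => h b, Finset.sum_add_distrib]
  congr 1
  rw [Finset.sum_eq_single a]
  · simp [δ]
  · intro c _ hc; simp [δ, hc]
  · simp

lemma DDM (a b c : Fin m) : (Dop a * Dop b) * Mop c
    = Mop c * (Dop a * Dop b) + δ b c • Dop a + δ a c • Dop b := by
  rw [mul_assoc, DM b c, mul_add, mul_smul_comm, mul_one, ← mul_assoc, DM a c, add_mul,
    smul_mul_assoc, one_mul, mul_assoc]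
  abel

lemma ΔM (g : Matrix (Fin m) (Fin m) ℂ) (hg : g.IsSymm) (c : Fin m) :
    Δo g * Mop c = Mop c * Δo g + (2 : ℂ) • Dl g c := by
  simp only [Δo, Finset.sum_mul, Finset.mul_sum, smul_mul_assoc, mul_smul_comm, DDM,
    smul_add, Finset.sum_add_distrib]
  rw [add_assoc]
  congr 1
  have h1 : (∑ a, ∑ b, g a b • (δ b c • Dop a)) = ∑ a, g a c • Dop a := by
    refine Finset.sum_congr rfl fun a _ => ?_
    rw [Finset.sum_eq_single c]
    · simp [δ]
    · intro d _ hd; simp [δ, hd]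
    · simp
  have h2 : (∑ a, ∑ b, g a b • (δ a c • Dop b)) = ∑ b, g c b • Dop b := by
    rw [Finset.sum_eq_single c]
    · simp [δ]
    · intro d _ hd
      refine Finset.sum_eq_zero fun b _ => ?_
      simp [δ, hd]
    · simp
  rw [h1, h2, two_smul, Dl]
  congr 1
  refine Finset.sum_congr rfl fun a _ => ?_
  rw [hg.apply c a]

lemma ΔE (g : Matrix (Fin m) (Fin m) ℂ) : Δo g * Eo m = Eo m * Δo g + (2 : ℂ) • Δo g := by
  have h : ∀ a b : Fin m, (Dop a * Dop b) * Eo m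
      = Eo m * (Dop a * Dop b) + (2 : ℂ) • (Dop a * Dop b) := by
    intro a b
    have h2 : (2:ℂ) • (Dop a * Dop b) = Dop a * Dop b + Dop a * Dop b := by
      rw [show (2:ℂ) = 1 + 1 by norm_num, add_smul, one_smul]
    rw [h2, mul_assoc, DE b, mul_add, ← mul_assoc, DE a, add_mul]
    noncomm_ring
  simp only [Δo, Finset.sum_mul, smul_mul_assoc, h, smul_add, Finset.sum_add_distrib]
  congr 1
  · simp only [Finset.mul_sum, mul_smul_comm]
  · simp only [Finset.smul_sum]
    refine Finset.sum_congr rfl fun a _ => Finset.sum_congr rfl fun b _ => ?_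
    exact smul_comm _ _ _

lemma DΔ (g : Matrix (Fin m) (Fin m) ℂ) (c : Fin m) :
    Dop c * Δo g = Δo g * Dop c := by
  simp only [Δo, Finset.sum_mul, Finset.mul_sum, smul_mul_assoc, mul_smul_comm]
  refine Finset.sum_congr rfl fun a _ => Finset.sum_congr rfl fun b _ => ?_
  refine congrArg (g a b • ·) ?_
  rw [← mul_assoc, DD_comm c a, mul_assoc, DD_comm c b, ← mul_assoc]

lemma ΔDl (g : Matrix (Fin m) (Fin m) ℂ) (i : Fin m) : Δo g * Dl g i = Dl g i * Δo g := by
  simp only [Dl, Finset.sum_mul, Finset.mul_sum, smul_mul_assoc, mul_smul_comm, DΔ]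

lemma DlA (g : Matrix (Fin m) (Fin m) ℂ) (k : Fin m) :
    Dl g k * Aop m = Aop m * Dl g k + (2:ℂ) • Dl g k := by
  simp only [Aop, mul_add, add_mul, mul_smul_comm, smul_mul_assoc, mul_one, one_mul,
    DlE g k, smul_add]
  abel

lemma AM (k : Fin m) : Aop m * Mop k = Mop k * Aop m + (2:ℂ) • Mop k := by
  simp only [Aop, mul_add, add_mul, mul_smul_comm, smul_mul_assoc, mul_one, one_mul,
    EM k, smul_add]
  abel

lemma ΔA (g : Matrix (Fin m) (Fin m) ℂ) :
    Δo g * Aop m = Aop m * Δo g + (4:ℂ) • Δo g := by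
  simp only [Aop, mul_add, add_mul, mul_smul_comm, smul_mul_assoc, mul_one, one_mul,
    ΔE g, smul_add, smul_smul]
  rw [show ((2:ℂ) * 2) = (4:ℂ) by norm_num]
  abel

/-- The symmetric expression for `Bo i * Bo j`. -/
lemma key (g : Matrix (Fin m) (Fin m) ℂ) (hg : g.IsSymm) (i j : Fin m) :
    Bo m g i * Bo m g j =
      Aop m * Aop m * (Dl g i * Dl g j) + (2:ℂ) • (Aop m * (Dl g i * Dl g j))
        - Mop j * Aop m * (Dl g i * Δo g) - Mop i * Aop m * (Dl g j * Δo g)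
        - (2:ℂ) • (Mop j * (Dl g i * Δo g)) - (2:ℂ) • (Mop i * (Dl g j * Δo g))
        - g i j • (Aop m * Δo g) + Mop i * Mop j * (Δo g * Δo g) := by
  have expand : Bo m g i * Bo m g j =
      Aop m * Dl g i * (Aop m * Dl g j) - Aop m * Dl g i * (Mop j * Δo g)
        - Mop i * Δo g * (Aop m * Dl g j) + Mop i * Δo g * (Mop j * Δo g) := by
    simp only [Bo, sub_mul, mul_sub]
    abel
  rw [expand]
  have t1 : Aop m * Dl g i * (Aop m * Dl g j)
      = Aop m * Aop m * (Dl g i * Dl g j) + (2:ℂ) • (Aop m * (Dl g i * Dl g j)) := by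
    calc Aop m * Dl g i * (Aop m * Dl g j) = Aop m * (Dl g i * Aop m) * Dl g j := by
          noncomm_ring
    _ = Aop m * (Aop m * Dl g i + (2:ℂ) • Dl g i) * Dl g j := by rw [DlA g i]
    _ = _ := by
        rw [mul_add, add_mul, mul_smul_comm, smul_mul_assoc]
        noncomm_ring
  have t2 : Aop m * Dl g i * (Mop j * Δo g)
      = Mop j * Aop m * (Dl g i * Δo g) + (2:ℂ) • (Mop j * (Dl g i * Δo g))
        + g i j • (Aop m * Δo g) := by
    calc Aop m * Dl g i * (Mop j * Δo g) = Aop m * (Dl g i * Mop j) * Δo g := by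
          noncomm_ring
    _ = Aop m * (Mop j * Dl g i + g i j • 1) * Δo g := by rw [DlM g i j]
    _ = Aop m * Mop j * (Dl g i * Δo g) + g i j • (Aop m * Δo g) := by
        rw [mul_add, add_mul, mul_smul_comm, smul_mul_assoc, mul_one]
        try noncomm_ring
    _ = _ := by
        rw [AM j, add_mul, smul_mul_assoc, mul_assoc]
        try rw [mul_assoc (Mop j) (Aop m)]
        try noncomm_ring
  have t3 : Mop i * Δo g * (Aop m * Dl g j)
      = Mop i * Aop m * (Dl g j * Δo g) + (4:ℂ) • (Mop i * (Dl g j * Δo g)) := by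
    calc Mop i * Δo g * (Aop m * Dl g j) = Mop i * (Δo g * Aop m) * Dl g j := by
          noncomm_ring
    _ = Mop i * (Aop m * Δo g + (4:ℂ) • Δo g) * Dl g j := by rw [ΔA g]
    _ = Mop i * Aop m * (Δo g * Dl g j) + (4:ℂ) • (Mop i * (Δo g * Dl g j)) := by
        rw [mul_add, add_mul, mul_smul_comm, smul_mul_assoc]
        noncomm_ring
    _ = _ := by rw [ΔDl]
  have t4 : Mop i * Δo g * (Mop j * Δo g)
      = Mop i * Mop j * (Δo g * Δo g) + (2:ℂ) • (Mop i * (Dl g j * Δo g)) := by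
    calc Mop i * Δo g * (Mop j * Δo g) = Mop i * (Δo g * Mop j) * Δo g := by
          noncomm_ring
    _ = Mop i * (Mop j * Δo g + (2:ℂ) • Dl g j) * Δo g := by rw [ΔM g hg j]
    _ = _ := by
        rw [mul_add, add_mul, mul_smul_comm, smul_mul_assoc]
        noncomm_ring
  rw [t1, t2, t3, t4]
  have h4 : (4:ℂ) • (Mop i * (Dl g j * Δo g))
      = (2:ℂ) • (Mop i * (Dl g j * Δo g)) + (2:ℂ) • (Mop i * (Dl g j * Δo g)) := by
    rw [← add_smul]; norm_num
  rw [h4]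
  abel

lemma Bo_comm (g : Matrix (Fin m) (Fin m) ℂ) (hg : g.IsSymm) (i j : Fin m) :
    Bo m g i * Bo m g j = Bo m g j * Bo m g i := by
  rw [key g hg i j, key g hg j i, DlDl g i j, MM i j, hg.apply j i]
  abel

/-! ### Bridge lemmas -/

lemma dlow_eq (g : Matrix (Fin m) (Fin m) ℂ) (k : Fin m) (p : P m) :
    dlow m g k p = Dl g k p := by
  simp [dlow, Dl, LinearMap.sum_apply]

lemma hdel (g : Matrix (Fin m) (Fin m) ℂ) (hd : IsUnit g.det) (a c : Fin m) :
    (∑ b, g⁻¹ a b * g b c) = if a = c then 1 else 0 := by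
  have hinv : g⁻¹ * g = 1 := Matrix.nonsing_inv_mul g hd
  have := congrFun (congrFun hinv a) c
  simpa [Matrix.mul_apply, Matrix.one_apply] using this

lemma Eop_eq (g : Matrix (Fin m) (Fin m) ℂ) (hd : IsUnit g.det) (p : P m) :
    Eop m g p = Eo m p := by
  have step : ∀ a b : Fin m, g⁻¹ a b • (X a * dlow m g b p)
      = ∑ c, (g⁻¹ a b * g b c) • (X a * pderiv c p) := by
    intro a b
    rw [dlow, Finset.mul_sum, Finset.smul_sum]
    refine Finset.sum_congr rfl fun c _ => ?_
    rw [mul_smul_comm, smul_smul]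
  simp only [Eop, step]
  rw [Finset.sum_congr rfl fun a _ => Finset.sum_comm]
  rw [Finset.sum_congr rfl fun a (_ : a ∈ Finset.univ) => Finset.sum_congr rfl
    fun c (_ : c ∈ Finset.univ) => (Finset.sum_smul (f := fun b => g⁻¹ a b * g b c)).symm]
  simp only [hdel g hd]
  rw [Finset.sum_congr rfl fun a (_ : a ∈ Finset.univ) => Finset.sum_eq_single a
    (fun c _ hc => by simp [Ne.symm hc]) (by simp)]
  simp [Eo, LinearMap.sum_apply]

lemma Lap_eq (g : Matrix (Fin m) (Fin m) ℂ) (hg : g.IsSymm) (hd : IsUnit g.det) (p : P m) :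
    Lap m g p = Δo g p := by
  have step : ∀ a b : Fin m, g⁻¹ a b • dlow m g a (dlow m g b p)
      = ∑ c, ∑ d, (g⁻¹ a b * g a c * g b d) • pderiv c (pderiv d p) := by
    intro a b
    rw [dlow, Finset.smul_sum]
    refine Finset.sum_congr rfl fun c _ => ?_
    rw [dlow, map_sum, smul_smul, Finset.smul_sum]
    refine Finset.sum_congr rfl fun d _ => ?_
    rw [Derivation.map_smul, smul_smul]
  simp only [Lap, step]
  rw [Finset.sum_congr rfl fun a (_ : a ∈ Finset.univ) => Finset.sum_comm]
  rw [Finset.sum_comm]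
  rw [Finset.sum_congr rfl fun c (_ : c ∈ Finset.univ) =>
    (Finset.sum_congr rfl fun a (_ : a ∈ Finset.univ) => Finset.sum_comm)]
  rw [Finset.sum_congr rfl fun c (_ : c ∈ Finset.univ) => Finset.sum_comm]
  -- now: ∑ c, ∑ d, ∑ a, ∑ b, coeff • DD
  have coeff : ∀ c d : Fin m,
      (∑ a, ∑ b, g⁻¹ a b * g a c * g b d) = g c d := by
    intro c d
    have inner : ∀ a : Fin m, (∑ b, g⁻¹ a b * g a c * g b d)
        = g a c * (if a = d then 1 else 0) := by
      intro a
      rw [← hdel g hd a d, Finset.mul_sum]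
      refine Finset.sum_congr rfl fun b _ => by ring
    simp only [inner]
    rw [Finset.sum_eq_single d (fun b _ hb => by simp [hb]) (by simp), if_pos rfl,
      mul_one, hg.apply c d]
  have pull : ∀ c d : Fin m,
      (∑ a, ∑ b, (g⁻¹ a b * g a c * g b d) • pderiv c (pderiv d p))
        = g c d • pderiv c (pderiv d p) := by
    intro c d
    rw [Finset.sum_congr rfl fun a (_ : a ∈ Finset.univ) =>
      (Finset.sum_smul).symm, ← Finset.sum_smul, coeff c d]
  rw [Finset.sum_congr rfl fun c (_ : c ∈ Finset.univ) =>
    Finset.sum_congr rfl fun d (_ : d ∈ Finset.univ) => pull c d]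
  simp only [Δo, LinearMap.sum_apply, LinearMap.smul_apply, Module.End.mul_apply,
    Dop_apply]

end BesselAux

/-- The Bessel operators (with parameter `λ = 2 − m`) commute with each other. -/
theorem stmt5 (m : ℕ) (g : Matrix (Fin m) (Fin m) ℂ) (hg : g.IsSymm)
    (hd : IsUnit g.det) (i j : Fin m) (p : MvPolynomial (Fin m) ℂ) :
    Bop m g i (Bop m g j p) = Bop m g j (Bop m g i p) := by
  have hB : ∀ k q, Bop m g k q = BesselAux.Bo m g k q := by
    intro k q
    simp only [Bop, BesselAux.dlow_eq, BesselAux.Eop_eq g hd, BesselAux.Lap_eq g hg hd,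
      BesselAux.Bo, BesselAux.Aop, LinearMap.sub_apply, Module.End.mul_apply,
      LinearMap.add_apply, LinearMap.smul_apply, Module.End.one_apply,
      BesselAux.Mop_apply]
  simp only [hB]
  rw [← Module.End.mul_apply, ← Module.End.mul_apply, BesselAux.Bo_comm g hg i j]
end
end

section
/- The Bessel operator B_λ(x_k) = (−λ + 2E)∂_k − x_k Δ maps the ideal ⟨R²⟩ generated by R² = ∑ β^{ij} x_i x_j into itself if and only if λ = 2 − m (working with polynomials in m commuting variables). -/
open MvPolynomial

noncomputable section

/-- The Bessel operator with general parameter `λ`: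
`B_λ(x_k) = (−λ + 2E)∂_k − x_k Δ`. -/
def Blam (m : ℕ) (g : Matrix (Fin m) (Fin m) ℂ) (lam : ℂ) (k : Fin m)
    (p : MvPolynomial (Fin m) ℂ) : MvPolynomial (Fin m) ℂ :=
  (-lam) • dlow m g k p + (2 : ℂ) • Eop m g (dlow m g k p) - X k * Lap m g p

section Aux

variable {m : ℕ} {g : Matrix (Fin m) (Fin m) ℂ}

lemma aux_inv_symm (hg : g.IsSymm) : (g⁻¹).IsSymm := by
  unfold Matrix.IsSymm
  rw [Matrix.transpose_nonsing_inv, hg.eq]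

lemma aux_invg (hd : IsUnit g.det) (i k : Fin m) :
    ∑ j, g⁻¹ i j * g j k = if i = k then 1 else 0 := by
  have := Matrix.nonsing_inv_mul g hd
  have h2 := congrFun (congrFun this i) k
  simpa [Matrix.mul_apply, Matrix.one_apply] using h2

lemma aux_ginv (hd : IsUnit g.det) (i k : Fin m) :
    ∑ j, g i j * g⁻¹ j k = if i = k then 1 else 0 := by
  have := Matrix.mul_nonsing_inv g hd
  have h2 := congrFun (congrFun this i) k
  simpa [Matrix.mul_apply, Matrix.one_apply] using h2

lemma aux_trace (hd : IsUnit g.det) :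
    ∑ a, ∑ b, g a b * g⁻¹ b a = (m : ℂ) := by
  have : ∀ a, ∑ b, g a b * g⁻¹ b a = 1 := by
    intro a; rw [aux_ginv hd a a]; simp
  simp [this]

lemma pderiv_R2 (hg : g.IsSymm) (a : Fin m) :
    pderiv a (R2 m g) = ∑ l, (2 * g⁻¹ a l) • X l := by
  unfold R2
  rw [map_sum]
  simp only [map_sum, (pderiv a).map_smul, pderiv_mul, pderiv_X, Pi.single_apply,
    smul_eq_mul, ite_mul, one_mul, zero_mul, mul_ite, mul_one, mul_zero, smul_add,
    smul_ite, smul_zero]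
  rw [Finset.sum_comm]
  simp only [Finset.sum_add_distrib, Finset.sum_ite_irrel, Finset.sum_const_zero,
    Finset.sum_ite_eq, Finset.sum_ite_eq', Finset.mem_univ, if_true]
  rw [← Finset.sum_add_distrib]
  refine Finset.sum_congr rfl fun l _ => ?_
  rw [(aux_inv_symm hg).apply l a]
  module

lemma dlow_R2 (hg : g.IsSymm) (hd : IsUnit g.det) (k : Fin m) :
    dlow m g k (R2 m g) = (2 : ℂ) • X k := by
  unfold dlow
  simp only [pderiv_R2 hg, Finset.smul_sum, smul_smul]
  rw [Finset.sum_comm]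
  have h : ∀ l, ∑ i, (g k i * (2 * g⁻¹ i l)) • (X l : MvPolynomial (Fin m) ℂ)
      = (if k = l then (2:ℂ) else 0) • X l := by
    intro l
    rw [← Finset.sum_smul]
    congr 1
    have : ∑ i, g k i * (2 * g⁻¹ i l) = 2 * ∑ i, g k i * g⁻¹ i l := by
      rw [Finset.mul_sum]; exact Finset.sum_congr rfl fun i _ => by ring
    rw [this, aux_ginv hd]
    split <;> simp
  rw [Finset.sum_congr rfl fun l _ => h l]
  simp [ite_smul, Finset.sum_ite_eq]

lemma dlow_mul (k : Fin m) (p q : MvPolynomial (Fin m) ℂ) :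
    dlow m g k (p * q) = dlow m g k p * q + p * dlow m g k q := by
  unfold dlow
  rw [Finset.sum_mul, Finset.mul_sum, ← Finset.sum_add_distrib]
  refine Finset.sum_congr rfl fun i _ => ?_
  rw [pderiv_mul]
  rw [smul_add, smul_mul_assoc, mul_smul_comm]

lemma Eop_eq (hd : IsUnit g.det) (p : MvPolynomial (Fin m) ℂ) :
    Eop m g p = ∑ i, X i * pderiv i p := by
  unfold Eop dlow
  simp only [Finset.mul_sum, mul_smul_comm, Finset.smul_sum, smul_smul]
  refine Finset.sum_congr rfl fun i _ => ?_
  rw [Finset.sum_comm]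
  have h : ∀ c, ∑ j, (g⁻¹ i j * g j c) • (X i * pderiv c p)
      = (if i = c then (1:ℂ) else 0) • (X i * pderiv c p) := fun c => by
    rw [← Finset.sum_smul, aux_invg hd]
  rw [Finset.sum_congr rfl fun c _ => h c]
  simp [ite_smul, Finset.sum_ite_eq]

lemma Lap_eq (hg : g.IsSymm) (hd : IsUnit g.det) (p : MvPolynomial (Fin m) ℂ) :
    Lap m g p = ∑ a, ∑ b, g a b • pderiv a (pderiv b p) := by
  unfold Lap dlow
  simp only [map_sum, Derivation.map_smul, Finset.smul_sum, smul_smul]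
  have swap : ∀ (f : Fin m → Fin m → Fin m → Fin m → MvPolynomial (Fin m) ℂ),
      ∑ i, ∑ j, ∑ a, ∑ b, f i j a b = ∑ a, ∑ b, ∑ i, ∑ j, f i j a b := by
    intro f
    calc ∑ i, ∑ j, ∑ a, ∑ b, f i j a b
        = ∑ i, ∑ a, ∑ j, ∑ b, f i j a b :=
          Finset.sum_congr rfl fun i _ => Finset.sum_comm
      _ = ∑ a, ∑ i, ∑ j, ∑ b, f i j a b := Finset.sum_comm
      _ = ∑ a, ∑ i, ∑ b, ∑ j, f i j a b :=
          Finset.sum_congr rfl fun a _ => Finset.sum_congr rfl fun i _ => Finset.sum_comm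
      _ = ∑ a, ∑ b, ∑ i, ∑ j, f i j a b :=
          Finset.sum_congr rfl fun a _ => Finset.sum_comm
  rw [swap]
  refine Finset.sum_congr rfl fun a _ => Finset.sum_congr rfl fun b _ => ?_
  rw [show (∑ i, ∑ j, (g⁻¹ i j * (g i a * g j b)) • pderiv a (pderiv b p))
      = (∑ i, ∑ j, g⁻¹ i j * (g i a * g j b)) • pderiv a (pderiv b p) from by
    rw [Finset.sum_smul]
    exact Finset.sum_congr rfl fun i _ => by rw [Finset.sum_smul]]
  congr 1
  have h1 : ∀ i, ∑ j, g⁻¹ i j * (g i a * g j b) = g i a * (if i = b then 1 else 0) := by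
    intro i
    rw [show (∑ j, g⁻¹ i j * (g i a * g j b)) = g i a * ∑ j, g⁻¹ i j * g j b from by
      rw [Finset.mul_sum]; exact Finset.sum_congr rfl fun j _ => by ring, aux_invg hd]
  rw [Finset.sum_congr rfl fun i _ => h1 i]
  simp only [mul_ite, mul_one, mul_zero, Finset.sum_ite_eq', Finset.mem_univ, if_true]
  exact hg.apply a b

lemma Eop_mul (hd : IsUnit g.det) (p q : MvPolynomial (Fin m) ℂ) :
    Eop m g (p * q) = Eop m g p * q + p * Eop m g q := by
  rw [Eop_eq hd, Eop_eq hd, Eop_eq hd]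
  rw [Finset.sum_mul, Finset.mul_sum, ← Finset.sum_add_distrib]
  refine Finset.sum_congr rfl fun i _ => ?_
  rw [pderiv_mul]; ring

lemma Eop_R2 (hg : g.IsSymm) (hd : IsUnit g.det) :
    Eop m g (R2 m g) = (2 : ℂ) • R2 m g := by
  rw [Eop_eq hd]
  simp only [pderiv_R2 hg]
  unfold R2
  simp only [Finset.mul_sum, Finset.smul_sum, mul_smul_comm, smul_smul]

lemma Eop_X (hd : IsUnit g.det) (k : Fin m) (p : MvPolynomial (Fin m) ℂ) :
    Eop m g (X k * p) = X k * p + X k * Eop m g p := by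
  rw [Eop_eq hd, Eop_eq hd]
  simp only [pderiv_mul, pderiv_X, Pi.single_apply, mul_add, ite_mul, one_mul, zero_mul,
    mul_ite, mul_zero]
  rw [Finset.sum_add_distrib]
  congr 1
  · simp [Finset.sum_ite_eq]
  · rw [Finset.mul_sum]; exact Finset.sum_congr rfl fun i _ => by ring

lemma Lap_R2_mul (hg : g.IsSymm) (hd : IsUnit g.det) (p : MvPolynomial (Fin m) ℂ) :
    Lap m g (R2 m g * p) =
      ((2 * m : ℕ) : ℂ) • p + (4 : ℂ) • Eop m g p + R2 m g * Lap m g p := by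
  have hab : ∀ a b : Fin m, pderiv a (pderiv b (R2 m g)) = (2 * g⁻¹ b a) • 1 := by
    intro a b
    rw [pderiv_R2 hg, map_sum]
    simp only [(pderiv a).map_smul, pderiv_X, Pi.single_apply, smul_ite, smul_zero,
      Finset.sum_ite_eq', Finset.mem_univ, if_true]
  have expand : ∀ a b : Fin m, pderiv a (pderiv b (R2 m g * p)) =
      (2 * g⁻¹ b a) • p + pderiv b (R2 m g) * pderiv a p
        + pderiv a (R2 m g) * pderiv b p + R2 m g * pderiv a (pderiv b p) := by
    intro a b
    rw [pderiv_mul, map_add, pderiv_mul, pderiv_mul, hab, smul_mul_assoc, one_mul]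
    abel
  rw [Lap_eq hg hd, Lap_eq hg hd]
  simp only [expand, smul_add, Finset.sum_add_distrib]
  have S1 : ∑ a, ∑ b, g a b • ((2 * g⁻¹ b a) • p) = ((2 * m : ℕ) : ℂ) • p := by
    simp only [smul_smul]
    rw [show (∑ a, ∑ b, (g a b * (2 * g⁻¹ b a)) • p)
        = (∑ a, ∑ b, g a b * (2 * g⁻¹ b a)) • p from by
      rw [Finset.sum_smul]
      exact Finset.sum_congr rfl fun a _ => by rw [Finset.sum_smul]]
    congr 1
    have : ∑ a, ∑ b, g a b * (2 * g⁻¹ b a) = 2 * ∑ a, ∑ b, g a b * g⁻¹ b a := by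
      rw [Finset.mul_sum]
      refine Finset.sum_congr rfl fun a _ => ?_
      rw [Finset.mul_sum]
      exact Finset.sum_congr rfl fun b _ => by ring
    rw [this, aux_trace hd]
    push_cast
    ring
  have S2 : ∑ a, ∑ b, g a b • (pderiv b (R2 m g) * pderiv a p) = (2 : ℂ) • Eop m g p := by
    simp only [pderiv_R2 hg, Finset.sum_mul, smul_mul_assoc, Finset.smul_sum, smul_smul]
    rw [Eop_eq hd, Finset.smul_sum]
    refine Finset.sum_congr rfl fun a _ => ?_
    rw [Finset.sum_comm]
    have h : ∀ l, ∑ b, (g a b * (2 * g⁻¹ b l)) • (X l * pderiv a p)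
        = ((2 : ℂ) * if a = l then 1 else 0) • (X l * pderiv a p) := by
      intro l
      rw [← Finset.sum_smul]
      congr 1
      rw [show (∑ b, g a b * (2 * g⁻¹ b l)) = 2 * ∑ b, g a b * g⁻¹ b l from by
        rw [Finset.mul_sum]; exact Finset.sum_congr rfl fun b _ => by ring, aux_ginv hd]
    rw [Finset.sum_congr rfl fun l _ => h l]
    simp [ite_smul, Finset.sum_ite_eq, smul_smul]
  have S3 : ∑ a, ∑ b, g a b • (pderiv a (R2 m g) * pderiv b p) = (2 : ℂ) • Eop m g p := by
    rw [Finset.sum_comm, ← S2]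
    refine Finset.sum_congr rfl fun b _ => Finset.sum_congr rfl fun a _ => ?_
    rw [hg.apply b a]
  have S4 : ∑ a, ∑ b, g a b • (R2 m g * pderiv a (pderiv b p))
      = R2 m g * ∑ a, ∑ b, g a b • pderiv a (pderiv b p) := by
    simp only [Finset.mul_sum, mul_smul_comm]
  rw [S1, S2, S3, S4]
  module

lemma Eop_add (hd : IsUnit g.det) (p q : MvPolynomial (Fin m) ℂ) :
    Eop m g (p + q) = Eop m g p + Eop m g q := by
  rw [Eop_eq hd, Eop_eq hd, Eop_eq hd, ← Finset.sum_add_distrib]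
  exact Finset.sum_congr rfl fun i _ => by rw [map_add]; ring

lemma Eop_smul (hd : IsUnit g.det) (c : ℂ) (p : MvPolynomial (Fin m) ℂ) :
    Eop m g (c • p) = c • Eop m g p := by
  rw [Eop_eq hd, Eop_eq hd, Finset.smul_sum]
  exact Finset.sum_congr rfl fun i _ => by
    rw [(pderiv i).map_smul, mul_smul_comm]

lemma key (hg : g.IsSymm) (hd : IsUnit g.det) (lam : ℂ) (k : Fin m)
    (p : MvPolynomial (Fin m) ℂ) :
    Blam m g lam k (R2 m g * p) =
      ((4 : ℂ) - 2 * lam - 2 * m) • (X k * p) +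
        R2 m g * (Blam m g lam k p + (4 : ℂ) • dlow m g k p) := by
  unfold Blam
  rw [dlow_mul, dlow_R2 hg hd, Lap_R2_mul hg hd, smul_mul_assoc,
    Eop_add hd, Eop_smul hd, Eop_X hd, Eop_mul hd, Eop_R2 hg hd]
  simp only [smul_eq_C_mul, map_sub, map_add, map_mul, map_neg, map_ofNat, Nat.cast_mul,
    Nat.cast_ofNat]
  ring

lemma R2_homog : (R2 m g).IsHomogeneous 2 := by
  unfold R2
  refine IsHomogeneous.sum _ _ _ fun i _ => IsHomogeneous.sum _ _ _ fun j _ => ?_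
  rw [smul_eq_C_mul]
  have := (isHomogeneous_C (Fin m) (g⁻¹ i j)).mul
    ((isHomogeneous_X ℂ i).mul (isHomogeneous_X ℂ j))
  simpa using this

end Aux

/-- `B_λ` maps the ideal `⟨R²⟩` into itself if and only if `λ = 2 − m`. -/
theorem stmt6 (m : ℕ) (hm : 2 ≤ m) (g : Matrix (Fin m) (Fin m) ℂ) (hg : g.IsSymm)
    (hd : IsUnit g.det) (lam : ℂ) :
    (∀ (k : Fin m) (p : MvPolynomial (Fin m) ℂ),
        Blam m g lam k (R2 m g * p) ∈ Ideal.span {R2 m g}) ↔ lam = 2 - (m : ℂ) := by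
  constructor
  · intro h
    have hk : 0 < m := by omega
    set k : Fin m := ⟨0, hk⟩
    have h1 := h k 1
    rw [key hg hd] at h1
    have hR : R2 m g * (Blam m g lam k 1 + (4 : ℂ) • dlow m g k 1) ∈ Ideal.span {R2 m g} :=
      Ideal.mem_span_singleton.mpr ⟨_, rfl⟩
    have h2 : ((4 : ℂ) - 2 * lam - 2 * m) • (X k * 1) ∈ Ideal.span {R2 m g} := by
      have := Ideal.sub_mem _ h1 hR
      simpa using this
    rw [mul_one] at h2
    obtain ⟨q, hq⟩ := Ideal.mem_span_singleton.mp h2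
    have h3 := congrArg (coeff (Finsupp.single k 1)) hq
    rw [coeff_smul, coeff_X, if_pos rfl, smul_eq_mul, mul_one, coeff_mul] at h3
    have hzero : ∀ x ∈ Finset.HasAntidiagonal.antidiagonal (Finsupp.single k (1:ℕ)),
        coeff x.1 (R2 m g) * coeff x.2 q = 0 := by
      intro x hx
      rw [Finset.HasAntidiagonal.mem_antidiagonal] at hx
      have hdeg : x.1.degree + x.2.degree = 1 := by
        have h0 : (x.1 + x.2).degree = 1 := by
          rw [hx, Finsupp.degree_single]
        rw [← h0]
        simp [Finsupp.degree_eq_weight_one, map_add]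
      have hne : x.1.degree ≠ 2 := by omega
      rw [R2_homog.coeff_eq_zero hne, zero_mul]
    rw [Finset.sum_eq_zero hzero] at h3
    have : (4 : ℂ) - 2 * lam - 2 * m = 0 := h3
    linear_combination -this / 2
  · intro hlam k p
    rw [key hg hd]
    have hz : (4 : ℂ) - 2 * lam - 2 * m = 0 := by rw [hlam]; ring
    rw [hz, zero_smul, zero_add]
    exact Ideal.mem_span_singleton.mpr ⟨_, rfl⟩
end
end
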